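/- Let φ = (1+√5)/2, let p₁ > 0, and let T : ℕ×ℕ → ℝ satisfy T(a,b) ≤ T(a−1,b) + T(a−1,b−1) + p₁·a for all a,b ≥ 1, T(a,0) ≤ p₁·a for all a, and T(0,b) ≤ p₁ for all b. Then there exists a constant p₂ > 0 such that T(a,b) ≤ p₂·φ^{a+b} − p₁·(a+2) for all a,b ∈ ℕ; in particular T(a,b) ∈ O(φ^{a+b}). -/
import Mathlib

noncomputable def phi : ℝ := (1 + Real.sqrt 5) / 2

lemma sqrt5_sq : Real.sqrt 5 ^ 2 = 5 := Real.sq_sqrt (by norm_num)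

lemma sqrt5_ge : (2.2 : ℝ) ≤ Real.sqrt 5 := by
  rw [show (2.2:ℝ) = Real.sqrt (2.2^2) by rw [Real.sqrt_sq]; norm_num]
  exact Real.sqrt_le_sqrt (by norm_num)

lemma phi_ge : (1.6 : ℝ) ≤ phi := by
  have := sqrt5_ge; unfold phi; linarith

lemma phi_sq : phi ^ 2 = phi + 1 := by
  have := sqrt5_sq; unfold phi; nlinarith

lemma phi_pow_lin' : ∀ a : ℕ, 2 * (a : ℝ) + 4 ≤ 3 * phi ^ (a + 1) := by
  intro a
  induction a with
  | zero => simpa using by have := phi_ge; norm_num; linarith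
  | succ n ih =>
      have hpos : (0:ℝ) ≤ phi ^ (n+1) := pow_nonneg (by have := phi_ge; linarith) _
      have h1 : (1.6:ℝ) * (3 * phi ^ (n+1)) ≤ phi * (3 * phi ^ (n+1)) := by
        have := phi_ge; nlinarith
      push_cast
      calc 2 * ((n:ℝ) + 1) + 4 ≤ 1.6 * (2 * n + 4) := by nlinarith [Nat.cast_nonneg (α := ℝ) n]
        _ ≤ 1.6 * (3 * phi ^ (n+1)) := by nlinarith
        _ ≤ phi * (3 * phi ^ (n+1)) := h1
        _ = 3 * phi ^ (n + 1 + 1) := by ring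

lemma phi_pow_lin : ∀ a : ℕ, 2 * (a : ℝ) + 2 ≤ 3 * phi ^ a := by
  intro a
  cases a with
  | zero => norm_num
  | succ n =>
      have := phi_pow_lin' n
      push_cast at this ⊢
      linarith

/-- Lemma 10: if `T : ℕ×ℕ → ℝ` satisfies
`T(a,b) ≤ T(a−1,b) + T(a−1,b−1) + p₁·a` for `a,b ≥ 1`, `T(a,0) ≤ p₁·a` and `T(0,b) ≤ p₁`,
then there is a constant `p₂ > 0` with `T(a,b) ≤ p₂·φ^(a+b) − p₁·(a+2)` for all `a,b`,
where `φ = (1+√5)/2`; in particular `T(a,b) ∈ O(φ^(a+b))`. -/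
theorem searchTree_time_bound (p₁ : ℝ) (hp₁ : 0 < p₁) (T : ℕ × ℕ → ℝ)
    (hrec : ∀ a b : ℕ, T (a + 1, b + 1) ≤ T (a, b + 1) + T (a, b) + p₁ * (a + 1))
    (ha0 : ∀ a : ℕ, T (a, 0) ≤ p₁ * a)
    (hb0 : ∀ b : ℕ, T (0, b) ≤ p₁) :
    ∃ p₂ : ℝ, 0 < p₂ ∧ ∀ a b : ℕ,
      T (a, b) ≤ p₂ * ((1 + Real.sqrt 5) / 2) ^ (a + b) - p₁ * (a + 2) := by
  have hφ1 : (1:ℝ) ≤ phi := by have := phi_ge; linarith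
  refine ⟨3 * p₁, by linarith, ?_⟩
  have key : ∀ a b : ℕ, T (a, b) ≤ 3 * p₁ * phi ^ (a + b) - p₁ * (a + 2) := by
    intro a
    induction a with
    | zero =>
        intro b
        have h1 : (1:ℝ) ≤ phi ^ b := one_le_pow₀ hφ1
        have := hb0 b
        simp only [Nat.zero_add, Nat.cast_zero]
        nlinarith
    | succ a ih =>
        intro b
        cases b with
        | zero =>
            have h := ha0 (a + 1)
            have h2 := phi_pow_lin (a + 1)
            push_cast at h2
            have : p₁ * (2 * ((a:ℝ)+1) + 2) ≤ p₁ * (3 * phi ^ (a+1)) :=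
              mul_le_mul_of_nonneg_left h2 (le_of_lt hp₁)
            push_cast at h ⊢
            simp only [Nat.add_zero] at *
            nlinarith
        | succ b =>
            have h := hrec a b
            have h1 := ih (b + 1)
            have h2 := ih b
            have hpow : phi ^ (a + 1 + (b + 1)) = phi ^ (a + (b+1)) + phi ^ (a + b) := by
              have : phi ^ (a + 1 + (b + 1)) = phi ^ (a + b) * phi ^ 2 := by ring
              rw [this, phi_sq]
              have : phi ^ (a + (b+1)) = phi ^ (a+b) * phi := by ring
              rw [this]; ring
            push_cast at h h1 h2 ⊢
            rw [hpow]
            nlinarith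
  intro a b
  have := key a b
  simpa [phi] using this
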